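/- Corollary 2 (simplified dual bounds with anchors and resource capacity at zero): let F : ℝ^n → ℝ be differentiable with L-Lipschitz continuous gradient, μ > 0, b₀ ∈ ℝ^n, A ∈ ℝ^{m×n} with nonzero j-th row a_j, and η = 1/‖a_j‖². Suppose (q̲, λ̲), (q, λ), (q̄, λ̄) satisfy μ q̲ + ∇F(0) + b₀ + Aᵀλ̲ = 0, ∇F(q) + b₀ + Aᵀλ = 0, and L q̄ + ∇F(0) + b₀ + Aᵀλ̄ = 0, with λ̲_l = λ_l = λ̄_l = 0 for every l ≠ j, λ̲_j ≥ 0, λ_j ≥ 0, λ̄_j ≥ 0, and tightness with zero right-hand side: ⟨a_j, q̲⟩ = 0 and ⟨a_j, q̄⟩ = 0. Then [ η[⟨a_j, −∇F(0) − b₀⟩]^+ − √η L(‖q̄‖ + ‖q‖) ]^+ ≤ λ_j ≤ η[⟨a_j, −∇F(0) − b₀⟩]^+ + √η L(‖q̄‖ + ‖q‖). -/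

import Mathlib

open scoped RealInnerProductSpace

/-- `Aᵀ λ = ∑ l, λ_l a_l` where `a_l` is the `l`-th row of `A`, as a Euclidean vector. -/
noncomputable def transMul {m n : ℕ} (A : Matrix (Fin m) (Fin n) ℝ) (lam : Fin m → ℝ) :
    EuclideanSpace ℝ (Fin n) :=
  WithLp.toLp 2 (fun i => ∑ l, lam l * A l i)

/-- The `j`-th row of `A` regarded as a Euclidean vector. -/
noncomputable def rowVec {m n : ℕ} (A : Matrix (Fin m) (Fin n) ℝ) (j : Fin m) :
    EuclideanSpace ℝ (Fin n) :=
  WithLp.toLp 2 (fun i => A j i)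

lemma transMul_single {m n : ℕ} (A : Matrix (Fin m) (Fin n) ℝ) (j : Fin m)
    (v : Fin m → ℝ) (hv : ∀ l, l ≠ j → v l = 0) :
    transMul A v = v j • rowVec A j := by
  ext i
  show ∑ l, v l * A l i = v j * A j i
  exact Finset.sum_eq_single j (fun l _ hl => by rw [hv l hl]; ring) (by simp)

/-- Corollary 2 (simplified dual bounds with anchors and resource capacity at zero):
with the stationarity conditions (anchored at `r = 0`) of the lower model, original, and
upper model problems, vanishing of all multiplier components except the `j`-th,
nonnegativity of the `j`-th multipliers, and tightness with zero right-hand side,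
the shadow price satisfies
`[η[⟨a_j, −∇F(0) − b₀⟩]⁺ − √η L(‖q̄‖ + ‖q‖)]⁺ ≤ λ_j ≤ η[⟨a_j, −∇F(0) − b₀⟩]⁺ + √η L(‖q̄‖ + ‖q‖)`. -/
theorem dual_bounds_anchor_zero_capacity_zero
    (n m : ℕ) (F : EuclideanSpace ℝ (Fin n) → ℝ) (L μ : ℝ) (hL : 0 < L) (hμ : 0 < μ)
    (hF : Differentiable ℝ F)
    (hlip : ∀ x y : EuclideanSpace ℝ (Fin n),
      ‖gradient F x - gradient F y‖ ≤ L * ‖x - y‖)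
    (b0 qlow q qup : EuclideanSpace ℝ (Fin n))
    (A : Matrix (Fin m) (Fin n) ℝ) (j : Fin m) (haj : rowVec A j ≠ 0)
    (lamlow lam lamup : Fin m → ℝ)
    (hstatlow : μ • qlow + gradient F 0 + b0 + transMul A lamlow = 0)
    (hstat : gradient F q + b0 + transMul A lam = 0)
    (hstatup : L • qup + gradient F 0 + b0 + transMul A lamup = 0)
    (hcs : ∀ l, l ≠ j → lamlow l = 0 ∧ lam l = 0 ∧ lamup l = 0)
    (hlamlowj : 0 ≤ lamlow j) (hlamj : 0 ≤ lam j) (hlamupj : 0 ≤ lamup j)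
    (htightlow : ⟪rowVec A j, qlow⟫ = 0)
    (htightup : ⟪rowVec A j, qup⟫ = 0)
    (η : ℝ) (hη : η = 1 / ‖rowVec A j‖ ^ 2) :
    max (η * max ⟪rowVec A j, -gradient F 0 - b0⟫ 0 -
        Real.sqrt η * (L * (‖qup‖ + ‖q‖))) 0 ≤ lam j ∧
      lam j ≤ η * max ⟪rowVec A j, -gradient F 0 - b0⟫ 0 +
        Real.sqrt η * (L * (‖qup‖ + ‖q‖)) := by
  set a := rowVec A j with ha
  have hna : 0 < ‖a‖ := norm_pos_iff.mpr haj
  have hη0 : 0 < η := by rw [hη]; positivity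
  have hsqrtη : Real.sqrt η = 1 / ‖a‖ := by
    rw [hη, one_div, one_div, Real.sqrt_inv, Real.sqrt_sq hna.le]
  -- rewrite stationarity using single multiplier
  have hTM : transMul A lam = lam j • a :=
    transMul_single A j lam (fun l hl => (hcs l hl).2.1)
  have hTMup : transMul A lamup = lamup j • a :=
    transMul_single A j lamup (fun l hl => (hcs l hl).2.2)
  set s : ℝ := ⟪a, -gradient F 0 - b0⟫ with hs
  -- λ_j ‖a‖² = ⟪a, -∇F q - b0⟫
  have h1 : lam j * ‖a‖ ^ 2 = ⟪a, -gradient F q - b0⟫ := by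
    have : lam j • a = -gradient F q - b0 := by
      have := hstat
      rw [hTM] at this
      linear_combination (norm := module) this
    calc lam j * ‖a‖ ^ 2 = ⟪a, lam j • a⟫ := by
          rw [real_inner_smul_right, real_inner_self_eq_norm_sq]
      _ = _ := by rw [this]
  -- λ̄_j ‖a‖² = s
  have h2 : lamup j * ‖a‖ ^ 2 = s := by
    have heq : lamup j • a = -(L • qup) + (-gradient F 0 - b0) := by
      have := hstatup
      rw [hTMup] at this
      linear_combination (norm := module) this
    calc lamup j * ‖a‖ ^ 2 = ⟪a, lamup j • a⟫ := by
          rw [real_inner_smul_right, real_inner_self_eq_norm_sq]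
      _ = ⟪a, -(L • qup)⟫ + s := by rw [heq, inner_add_right]
      _ = s := by
          rw [inner_neg_right, real_inner_smul_right, htightup]; ring
  have hlamj_eq : lam j = η * ⟪a, -gradient F q - b0⟫ := by
    rw [← h1, hη]; field_simp
  have hlamupj_eq : lamup j = η * s := by
    rw [← h2, hη]; field_simp
  have hs0 : 0 ≤ s := by
    have := hlamupj
    rw [hlamupj_eq] at this
    nlinarith
  have hmaxs : max s 0 = s := max_eq_left hs0
  -- the difference bound
  have hdiff : |lam j - lamup j| ≤ Real.sqrt η * (L * ‖q‖) := by
    have hinner : lam j - lamup j = η * ⟪a, gradient F 0 - gradient F q⟫ := by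
      rw [hlamj_eq, hlamupj_eq, hs, ← mul_sub, ← inner_sub_right]
      congr 2
      abel
    have hcs2 : |⟪a, gradient F 0 - gradient F q⟫| ≤ ‖a‖ * (L * ‖q‖) := by
      calc |⟪a, gradient F 0 - gradient F q⟫| ≤ ‖a‖ * ‖gradient F 0 - gradient F q‖ :=
            abs_real_inner_le_norm _ _
        _ ≤ ‖a‖ * (L * ‖(0 : EuclideanSpace ℝ (Fin n)) - q‖) :=
            mul_le_mul_of_nonneg_left (hlip 0 q) (norm_nonneg _)
        _ = ‖a‖ * (L * ‖q‖) := by rw [zero_sub, norm_neg]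
    rw [hinner, abs_mul, abs_of_pos hη0]
    calc η * |⟪a, gradient F 0 - gradient F q⟫| ≤ η * (‖a‖ * (L * ‖q‖)) :=
          mul_le_mul_of_nonneg_left hcs2 hη0.le
      _ = Real.sqrt η * (L * ‖q‖) := by
          rw [hsqrtη, hη]; field_simp
  have habs := abs_le.mp hdiff
  have hE : Real.sqrt η * (L * ‖q‖) ≤ Real.sqrt η * (L * (‖qup‖ + ‖q‖)) := by
    have h0 : (0:ℝ) ≤ Real.sqrt η := Real.sqrt_nonneg _
    have hq : ‖q‖ ≤ ‖qup‖ + ‖q‖ := by linarith [norm_nonneg qup]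
    exact mul_le_mul_of_nonneg_left (mul_le_mul_of_nonneg_left hq hL.le) h0
  constructor
  · apply max_le _ hlamj
    rw [hmaxs, ← hlamupj_eq]
    linarith [habs.1]
  · rw [hmaxs, ← hlamupj_eq]
    linarith [habs.2]
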